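/- For every n ≥ 1, the polynomial Z_n factors completely over ℝ as Z_n = Π_{k=1}^{n} (X − 4·cos²(πk/(2n+1))); in particular all n roots of Z_n are real and lie in the interval [0, 4). -/

import Mathlib

open Polynomial Real

/-- The polynomial sequence `Z`: `Z 0 = 1`, `Z 1 = X - 1`,
`Z n = (X - 2) * Z (n-1) - Z (n-2)` for `n ≥ 2`. -/
noncomputable def Z : ℕ → Polynomial ℝ
  | 0 => 1
  | 1 => X - 1
  | n + 2 => (X - 2) * Z (n + 1) - Z n

lemma Z_monic_deg : ∀ n : ℕ, (Z n).Monic ∧ (Z n).natDegree = n := by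
  intro n
  induction n using Nat.strong_induction_on with
  | _ n ih =>
    match n with
    | 0 => constructor <;> simp [Z, monic_one]
    | 1 => exact ⟨by simpa [Z] using monic_X_sub_C (1:ℝ), by simpa [Z] using natDegree_X_sub_C (1:ℝ)⟩
    | n + 2 =>
      obtain ⟨h1m, h1d⟩ := ih (n + 1) (by omega)
      obtain ⟨h0m, h0d⟩ := ih n (by omega)
      have hXm : ((X : ℝ[X]) - 2).Monic := by
        rw [show ((2 : ℝ[X])) = C 2 from (map_ofNat C 2).symm]
        exact monic_X_sub_C 2
      have hpm : ((X - 2) * Z (n + 1)).Monic := hXm.mul h1m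
      have hpd : ((X - 2) * Z (n + 1)).natDegree = n + 2 := by
        rw [hXm.natDegree_mul h1m, h1d]
        have h2 : ((X : ℝ[X]) - 2).natDegree = 1 := by
          rw [show ((2 : ℝ[X])) = C 2 from (map_ofNat C 2).symm]
          exact natDegree_X_sub_C 2
        omega
      have hlt : (Z n).natDegree < ((X - 2) * Z (n + 1)).natDegree := by omega
      have hdeglt : (Z n).degree < ((X - 2) * Z (n + 1)).degree :=
        degree_lt_degree hlt
      refine ⟨?_, ?_⟩
      · show ((X - 2) * Z (n + 1) - Z n).Monic
        exact hpm.sub_of_left hdeglt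
      · show ((X - 2) * Z (n + 1) - Z n).natDegree = n + 2
        rw [natDegree_sub_eq_left_of_natDegree_lt hlt, hpd]

lemma sin_helper (A θ : ℝ) :
    Real.sin (A + 2 * θ) = (4 * Real.cos θ ^ 2 - 2) * Real.sin A - Real.sin (A - 2 * θ) := by
  rw [Real.sin_add, Real.sin_sub, Real.cos_two_mul]
  ring

lemma Z_eval_trig : ∀ (n : ℕ) (θ : ℝ),
    (Z n).eval (4 * Real.cos θ ^ 2) * Real.sin θ = Real.sin ((2 * n + 1) * θ) := by
  intro n
  induction n using Nat.strong_induction_on with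
  | _ n ih =>
    match n with
    | 0 =>
      intro θ
      simp [Z]
    | 1 =>
      intro θ
      have h3 : ((2 : ℝ) * (1 : ℕ) + 1) * θ = θ + 2 * θ := by push_cast; ring
      rw [h3, sin_helper, Real.sin_sub, Real.sin_two_mul, Real.cos_two_mul]
      simp [Z]
      ring
    | n + 2 =>
      intro θ
      have ih1 := ih (n + 1) (by omega) θ
      have ih0 := ih n (by omega) θ
      have hA : ((2 : ℝ) * (n + 2 : ℕ) + 1) * θ = (2 * (n + 1 : ℕ) + 1) * θ + 2 * θ := by
        push_cast; ring
      have hB : ((2 : ℝ) * (n : ℕ) + 1) * θ = (2 * (n + 1 : ℕ) + 1) * θ - 2 * θ := by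
        push_cast; ring
      rw [hA, sin_helper, ← ih1, ← hB, ← ih0]
      show ((X - 2) * Z (n + 1) - Z n).eval _ * _ = _
      simp only [eval_sub, eval_mul, eval_X, eval_ofNat]
      ring

theorem Z_factorization (n : ℕ) (hn : 1 ≤ n) :
    Z n = ∏ k ∈ Finset.Icc 1 n,
        (X - Polynomial.C (4 * Real.cos (π * k / (2 * n + 1)) ^ 2)) ∧
      (Z n).roots.card = n ∧
      ∀ x ∈ (Z n).roots, x ∈ Set.Ico (0 : ℝ) 4 := by
  set f : ℕ → ℝ := fun k => 4 * Real.cos (π * k / (2 * n + 1)) ^ 2 with hf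
  have hden : (0 : ℝ) < 2 * n + 1 := by positivity
  -- the angles lie in (0, π/2)
  have hθ : ∀ k ∈ Finset.Icc 1 n, 0 < π * k / (2 * n + 1) ∧ π * k / (2 * n + 1) < π / 2 := by
    intro k hk
    rw [Finset.mem_Icc] at hk
    have hk1 : (1 : ℝ) ≤ k := by exact_mod_cast hk.1
    have hkn : (k : ℝ) ≤ n := by exact_mod_cast hk.2
    constructor
    · positivity
    · rw [div_lt_div_iff₀ hden (by norm_num)]
      nlinarith [pi_pos]
  -- each f k is a root of Z n
  have hroot : ∀ k ∈ Finset.Icc 1 n, (Z n).eval (f k) = 0 := by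
    intro k hk
    obtain ⟨h1, h2⟩ := hθ k hk
    have hs : Real.sin (π * k / (2 * n + 1)) ≠ 0 :=
      (Real.sin_pos_of_pos_of_lt_pi h1 (h2.trans (by linarith [pi_pos]))).ne'
    have := Z_eval_trig n (π * k / (2 * n + 1))
    have harg : ((2 : ℝ) * n + 1) * (π * k / (2 * n + 1)) = k * π := by
      field_simp
    rw [harg, Real.sin_nat_mul_pi] at this
    exact (mul_eq_zero.mp this).resolve_right hs
  -- f is injective on Icc 1 n
  have hinj : Set.InjOn f (Finset.Icc 1 n) := by
    have key : ∀ k ∈ Finset.Icc 1 n, ∀ l ∈ Finset.Icc 1 n, k < l → f l < f k := by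
      intro k hk l hl hkl
      obtain ⟨hk1, hk2⟩ := hθ k hk
      obtain ⟨hl1, hl2⟩ := hθ l hl
      have hkl' : (k : ℝ) < l := by exact_mod_cast hkl
      have hlt : π * k / (2 * n + 1) < π * l / (2 * n + 1) := by
        gcongr
      have hcos : Real.cos (π * l / (2 * n + 1)) < Real.cos (π * k / (2 * n + 1)) :=
        Real.cos_lt_cos_of_nonneg_of_le_pi hk1.le (by linarith [pi_pos]) hlt
      have hcl : 0 < Real.cos (π * l / (2 * n + 1)) :=
        Real.cos_pos_of_mem_Ioo ⟨by linarith, hl2⟩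
      simp only [hf]
      nlinarith
    intro k hk l hl he
    simp only [Finset.coe_Icc, Set.mem_Icc] at hk hl
    rcases lt_trichotomy k l with h | h | h
    · exact absurd he (key k (Finset.mem_Icc.mpr hk) l (Finset.mem_Icc.mpr hl) h).ne'
    · exact h
    · exact absurd he.symm (key l (Finset.mem_Icc.mpr hl) k (Finset.mem_Icc.mpr hk) h).ne'
  -- bounds on f k
  have hbound : ∀ k ∈ Finset.Icc 1 n, f k ∈ Set.Ico (0 : ℝ) 4 := by
    intro k hk
    obtain ⟨h1, h2⟩ := hθ k hk
    have hcl : Real.cos (π * k / (2 * n + 1)) < 1 := by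
      have := Real.cos_lt_cos_of_nonneg_of_le_pi le_rfl
        ((h2.le).trans (by linarith [pi_pos])) h1
      simpa using this
    have hc0 : 0 < Real.cos (π * k / (2 * n + 1)) :=
      Real.cos_pos_of_mem_Ioo ⟨by linarith, h2⟩
    constructor
    · positivity
    · simp only [hf]; nlinarith
  -- the product polynomial
  set P : ℝ[X] := ∏ k ∈ Finset.Icc 1 n, (X - C (f k)) with hP
  obtain ⟨hZm, hZd⟩ := Z_monic_deg n
  have hPm : P.Monic := monic_prod_of_monic _ _ fun k _ => monic_X_sub_C _
  have hPd : P.natDegree = n := by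
    rw [hP, natDegree_prod _ _ fun k _ => X_sub_C_ne_zero _]
    simp [natDegree_X_sub_C, Nat.card_Icc]
  have hPeval : ∀ k ∈ Finset.Icc 1 n, P.eval (f k) = 0 := by
    intro k hk
    rw [hP, eval_prod]
    exact Finset.prod_eq_zero hk (by simp)
  -- difference is zero
  have hmain : Z n = P := by
    by_contra hne
    have hD : Z n - P ≠ 0 := sub_ne_zero.mpr hne
    have hdeg : (Z n - P).degree < (Z n).degree := by
      apply degree_sub_lt _ hZm.ne_zero
      · rw [hZm.leadingCoeff, hPm.leadingCoeff]
      · rw [degree_eq_natDegree hZm.ne_zero, degree_eq_natDegree hPm.ne_zero, hZd, hPd]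
    have hdeg' : (Z n - P).natDegree < n := by
      have := natDegree_lt_natDegree hD hdeg
      omega
    have hcard : (Z n - P).natDegree < ((Finset.Icc 1 n).image f).card := by
      rw [Finset.card_image_of_injOn hinj, Nat.card_Icc]
      omega
    have := eq_zero_of_natDegree_lt_card_of_eval_eq_zero' (Z n - P)
      ((Finset.Icc 1 n).image f) ?_ hcard
    · exact hD this
    · intro x hx
      obtain ⟨k, hk, rfl⟩ := Finset.mem_image.mp hx
      rw [eval_sub, hroot k hk, hPeval k hk, sub_zero]
  have hPne : (∏ k ∈ Finset.Icc 1 n, (X - C (f k))) ≠ 0 := by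
    rw [← hP]; exact hPm.ne_zero
  refine ⟨hmain, ?_, ?_⟩
  · rw [hmain, hP, roots_prod _ _ hPne]
    simp only [roots_X_sub_C]
    rw [Multiset.bind_singleton]
    simp [Nat.card_Icc]
  · intro x hx
    rw [hmain, hP, roots_prod _ _ hPne] at hx
    simp only [roots_X_sub_C, Multiset.bind_singleton, Multiset.mem_map] at hx
    obtain ⟨k, hk, rfl⟩ := hx
    exact hbound k hk
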